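/- arXiv:2102.08325 — 2 statements merged into one kernel-verified Lean document; each statement's English description precedes it below -/
import Mathlib

section
/- Consider a round-structured DAG where every vertex in round r ≥ 2 has strong edges to at least 2f+1 of the at most 3f+1 vertices in round r−1, where no two vertices in the same round have the same source. If a vertex v in round r₀ has at least 2f+1 vertices in round r₁ > r₀ with strong paths to v, then every vertex in any round r₂ > r₁ has a strong path to v. -/
theorem commit_path {V : Type} (f : ℕ) (Vtx : ℕ → Finset V) (SE : V → V → Prop)
    (N : V → Finset V)
    (hsize : ∀ r, (Vtx r).card ≤ 3 * f + 1)
    (hN : ∀ r u, u ∈ Vtx (r + 1) →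
        N u ⊆ Vtx r ∧ 2 * f + 1 ≤ (N u).card ∧ ∀ x ∈ N u, SE u x)
    (v : V) (r₀ r₁ : ℕ) (hv : v ∈ Vtx r₀) (hr : r₀ < r₁)
    (U : Finset V) (hU : U ⊆ Vtx r₁) (hUcard : 2 * f + 1 ≤ U.card)
    (hUpath : ∀ u ∈ U, Relation.ReflTransGen SE u v) :
    ∀ r₂, r₁ < r₂ → ∀ w ∈ Vtx r₂, Relation.ReflTransGen SE w v := by
  classical
  intro r₂
  induction r₂ with
  | zero => omega
  | succ r ih =>
    intro hlt w hw
    obtain ⟨hsub, hcard, hedge⟩ := hN r w hw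
    rcases Nat.lt_or_ge r₁ r with h | h
    · -- r > r₁ : all of Vtx r has paths
      have hne : (N w).Nonempty := Finset.card_pos.mp (by omega)
      obtain ⟨x, hx⟩ := hne
      exact Relation.ReflTransGen.head (hedge x hx) (ih h x (hsub hx))
    · -- r = r₁
      have hr1 : r = r₁ := by omega
      subst hr1
      have hint : (N w ∩ U).Nonempty := by
        by_contra hcon
        rw [Finset.not_nonempty_iff_eq_empty] at hcon
        have hdis : Disjoint (N w) U := Finset.disjoint_iff_inter_eq_empty.mpr hcon
        have := Finset.card_union_of_disjoint hdis
        have hsub2 : N w ∪ U ⊆ Vtx r := Finset.union_subset hsub hU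
        have := Finset.card_le_card hsub2
        have := hsize r
        omega
      obtain ⟨x, hx⟩ := hint
      rw [Finset.mem_inter] at hx
      exact Relation.ReflTransGen.head (hedge x hx.1) (hUpath x hx.2)
end

section
/- Suppose leaders are committed at increasing wave numbers, and whenever a process commits the leader of wave w it first commits (in wave order) all leaders of waves w' with previousDecided < w' < w for which a strong path exists from the wave-w leader. If the strong-path condition guaranteeing that any committed leader is reachable from all later leaders holds, then any two processes commit the same sequence of leaders, i.e., the committed leader sequence of one process is a prefix of the other's. -/
/-- The sequence of leaders committed when directly committing at a wave with
leader `v`, walking back through earlier waves, in increasing wave order. -/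
def seqFrom {V : Type} (leader : ℕ → Option V) (reach : V → V → Prop)
    [DecidableRel reach] : ℕ → V → List V
  | 0, v => [v]
  | (k + 1), v =>
      match leader k with
      | some u =>
          if reach v u then seqFrom leader reach k u ++ [v]
          else seqFrom leader reach k v
      | none => seqFrom leader reach k v

lemma seqFrom_prefix_aux {V : Type} (leader : ℕ → Option V) (reach : V → V → Prop)
    [DecidableRel reach] (w₁ : ℕ) (v₁ : V) (hl₁ : leader w₁ = some v₁)
    (H : ∀ w'' > w₁, ∀ u, leader w'' = some u → reach u v₁) :
    ∀ w, w₁ ≤ w → ∀ v, (w = w₁ → v = v₁) → (w₁ < w → reach v v₁) →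
      seqFrom leader reach w₁ v₁ <+: seqFrom leader reach w v := by
  intro w
  induction w with
  | zero =>
    intro hle v heq _
    have hw : w₁ = 0 := Nat.le_zero.mp hle
    rw [heq hw.symm, hw]
  | succ k ih =>
    intro hle v heq hr₁
    rcases Nat.lt_or_ge w₁ (k + 1) with hlt | hge
    · have hk : w₁ ≤ k := Nat.lt_succ_iff.mp hlt
      have hreach : reach v v₁ := hr₁ hlt
      show seqFrom leader reach w₁ v₁ <+: seqFrom leader reach (k+1) v
      rw [seqFrom]
      cases hlk : leader k with
      | none =>
        refine ih hk v (fun h => ?_) (fun _ => hreach)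
        subst h; rw [hl₁] at hlk; cases hlk
      | some u =>
        by_cases hr : reach v u
        · simp only [if_pos hr]
          refine (ih hk u (fun h => ?_) (fun h => H k h u hlk)).trans
            (List.prefix_append _ _)
          subst h; rw [hl₁] at hlk; exact (Option.some_inj.mp hlk).symm
        · simp only [if_neg hr]
          refine ih hk v (fun h => ?_) (fun _ => hreach)
          subst h; rw [hl₁] at hlk
          exact absurd (Option.some_inj.mp hlk ▸ hreach) hr
    · have hw : w₁ = k + 1 := le_antisymm hle hge
      rw [heq hw.symm, hw]

theorem committed_sequences_consistent {V : Type}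
    (leader : ℕ → Option V) (reach : V → V → Prop) [DecidableRel reach]
    (D₁ D₂ : Set ℕ)
    (hkey : ∀ w ∈ D₁ ∪ D₂, ∀ v, leader w = some v →
        ∀ w'' > w, ∀ u, leader w'' = some u → reach u v)
    (w₁ w₂ : ℕ) (v₁ v₂ : V) (h₁ : w₁ ∈ D₁) (h₂ : w₂ ∈ D₂)
    (hl₁ : leader w₁ = some v₁) (hl₂ : leader w₂ = some v₂) (hle : w₁ ≤ w₂) :
    (seqFrom leader reach w₁ v₁) <+: (seqFrom leader reach w₂ v₂) := by
  have H := hkey w₁ (Or.inl h₁) v₁ hl₁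
  refine seqFrom_prefix_aux leader reach w₁ v₁ hl₁ H w₂ hle v₂ (fun h => ?_)
    (fun h => H w₂ h v₂ hl₂)
  subst h; rw [hl₁] at hl₂; exact (Option.some_inj.mp hl₂).symm
end
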